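/- One-dimensional reduction: for w ∈ [0,1]^N sorted decreasingly (w₁ ≥ w₂ ≥ … ≥ w_N) with Σwᵢ > 0, the maximum of D(y) = 2⟨y,w⟩/(‖y‖₁+‖w‖₁) over y ∈ {0,1}^N is attained at some prefix vector y^(k) = (1,…,1,0,…,0) with k ones, i.e., max_y D(y) = max_{0≤k≤N} 2(w₁+…+w_k)/(k + Σᵢwᵢ). -/

import Mathlib

open Filter

noncomputable section

/-- Discrete soft-Dice loss `SD(x) = 1 - 2⟨x,w⟩/(‖x‖₁ + ‖w‖₁)`. -/
def SDd {N : ℕ} (w x : Fin N → ℝ) : ℝ :=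
  1 - 2 * (∑ i, x i * w i) / ((∑ i, x i) + (∑ i, w i))

/-- Discrete Dice score `D(y) = 2⟨y,w⟩/(‖y‖₁ + ‖w‖₁)`. -/
def Dd {N : ℕ} (w y : Fin N → ℝ) : ℝ :=
  2 * (∑ i, y i * w i) / ((∑ i, y i) + (∑ i, w i))

/-- The set of soft-Dice values over `[0,1]^N`. -/
def SDdvals {N : ℕ} (w : Fin N → ℝ) : Set ℝ :=
  {v : ℝ | ∃ x : Fin N → ℝ, (∀ i, x i ∈ Set.Icc (0:ℝ) 1) ∧ v = SDd w x}

/-- The set of Dice values over `{0,1}^N`. -/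
def Ddvals {N : ℕ} (w : Fin N → ℝ) : Set ℝ :=
  {v : ℝ | ∃ y : Fin N → ℝ, (∀ i, y i = 0 ∨ y i = 1) ∧ v = Dd w y}


lemma fin_strictMono_le {k : ℕ} (f : Fin k → ℕ) (hf : StrictMono f) :
    ∀ n (h : n < k), n ≤ f ⟨n, h⟩ := by
  intro n
  induction n with
  | zero => intro h; exact Nat.zero_le _
  | succ m ih =>
    intro h
    have h1 : m < k := Nat.lt_of_succ_lt h
    have := hf (show (⟨m, h1⟩ : Fin k) < ⟨m+1, h⟩ by simp [Fin.lt_def])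
    have := ih h1
    omega

/-- Sum over a finset is at most the prefix sum of the same cardinality, for antitone `w`. -/
lemma sum_le_prefix {N : ℕ} (w : Fin N → ℝ)
    (hsort : ∀ i j : Fin N, i ≤ j → w j ≤ w i)
    (s : Finset (Fin N)) :
    ∑ i ∈ s, w i ≤ ∑ j ∈ Finset.univ.filter (fun i : Fin N => (i:ℕ) < s.card), w j := by
  classical
  set k := s.card with hk
  have hkN : k ≤ N := by
    simpa using Finset.card_le_card (Finset.subset_univ s)
  have e := s.orderEmbOfFin hk.symm
  -- sum over s equals sum over Fin k of w (e j)
  have h1 : ∑ i ∈ s, w i = ∑ j : Fin k, w (s.orderEmbOfFin hk.symm j) := by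
    rw [← Finset.sum_attach s w]
    exact Fintype.sum_equiv (s.orderIsoOfFin hk.symm).toEquiv.symm _ _ (by
      intro x
      simp [← Finset.coe_orderIsoOfFin_apply])
  have hmono : StrictMono (fun j : Fin k => ((s.orderEmbOfFin hk.symm j : Fin N) : ℕ)) := by
    intro a b hab
    exact (s.orderEmbOfFin hk.symm).strictMono hab
  have h2 : ∀ j : Fin k, w (s.orderEmbOfFin hk.symm j) ≤ w (Fin.castLE hkN j) := by
    intro j
    apply hsort
    have := fin_strictMono_le _ hmono j j.isLt
    simpa [Fin.le_def] using this
  have h3 : ∑ j ∈ Finset.univ.filter (fun i : Fin N => (i:ℕ) < k), w j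
      = ∑ j : Fin k, w (Fin.castLE hkN j) := by
    refine Finset.sum_bij' (fun a ha => (⟨(a:ℕ), (Finset.mem_filter.1 ha).2⟩ : Fin k))
      (fun b _ => Fin.castLE hkN b) ?_ ?_ ?_ ?_ ?_
    · intro a ha; exact Finset.mem_univ _
    · intro b hb
      simp [Fin.castLE]
    · intro a ha; rfl
    · intro b hb; rfl
    · intro a ha; rfl
  rw [h1, h3]
  exact Finset.sum_le_sum (fun j _ => h2 j)


theorem sorted_dice_prefix_maximizer
    {N : ℕ} (hN : 1 ≤ N) (w : Fin N → ℝ)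
    (hw : ∀ i, w i ∈ Set.Icc (0:ℝ) 1)
    (hsort : ∀ i j : Fin N, i ≤ j → w j ≤ w i)
    (hpos : 0 < ∑ i, w i) :
    ∃ k : ℕ, k ≤ N ∧
      ∀ y : Fin N → ℝ, (∀ i, y i = 0 ∨ y i = 1) →
        Dd w y ≤ Dd w (fun i => if (i : ℕ) < k then (1:ℝ) else 0) := by
  classical
  set g : ℕ → ℝ := fun k => Dd w (fun i => if (i : ℕ) < k then (1:ℝ) else 0) with hg
  obtain ⟨k, hkmem, hkmax⟩ := Finset.exists_max_image (Finset.range (N+1)) g ⟨0, by simp⟩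
  refine ⟨k, by simpa [Nat.lt_succ_iff] using hkmem, ?_⟩
  intro y hy
  set s := Finset.univ.filter (fun i : Fin N => y i = 1) with hs
  set m := s.card with hm
  have hmN : m ≤ N := by simpa [hm] using Finset.card_le_card (Finset.subset_univ s)
  -- y as indicator of s
  have hyind : ∀ i, y i = if i ∈ s then (1:ℝ) else 0 := by
    intro i
    rcases hy i with h | h <;> simp [hs, h]
  have hsum_y : ∑ i, y i = (m : ℝ) := by
    rw [Finset.sum_congr rfl (fun i _ => hyind i)]
    simp [hm]
  have hsum_yw : ∑ i, y i * w i = ∑ i ∈ s, w i := by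
    rw [Finset.sum_congr rfl (fun i _ => by rw [hyind i])]
    simp [Finset.sum_ite_mem, ite_mul]
  -- prefix vector sums
  have hcardm : ∀ n : ℕ, n ≤ N →
      (Finset.univ.filter (fun i : Fin N => (i:ℕ) < n)).card = n := by
    intro n hn
    have : Finset.univ.filter (fun i : Fin N => (i:ℕ) < n)
        = Finset.map (Fin.castLEOrderEmb hn).toEmbedding Finset.univ := by
      ext i
      simp only [Finset.mem_filter, Finset.mem_univ, true_and, Finset.mem_map]
      constructor
      · intro h
        exact ⟨⟨(i:ℕ), h⟩, rfl⟩
      · rintro ⟨j, rfl⟩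
        exact j.isLt
    rw [this, Finset.card_map, Finset.card_univ, Fintype.card_fin]
  have hsum_pref1 : ∀ n : ℕ, n ≤ N →
      ∑ i : Fin N, (if (i:ℕ) < n then (1:ℝ) else 0) = (n : ℝ) := by
    intro n hn
    rw [Finset.sum_ite, Finset.sum_const, Finset.sum_const]
    simp [hcardm n hn]
  have hsum_prefw : ∀ n : ℕ,
      ∑ i : Fin N, (if (i:ℕ) < n then (1:ℝ) else 0) * w i
        = ∑ i ∈ Finset.univ.filter (fun i : Fin N => (i:ℕ) < n), w i := by
    intro n
    rw [Finset.sum_filter]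
    exact Finset.sum_congr rfl (fun i _ => by by_cases h : (i:ℕ) < n <;> simp [h])
  -- compare Dd y with g m
  have hDen : (0:ℝ) < (m : ℝ) + ∑ i, w i := by have := Nat.cast_nonneg (α := ℝ) m; linarith
  have step1 : Dd w y ≤ g m := by
    rw [hg]
    simp only [Dd]
    rw [hsum_y, hsum_yw, hsum_prefw m, hsum_pref1 m hmN]
    have h2 : (2:ℝ) * (∑ i ∈ s, w i)
        ≤ 2 * ∑ i ∈ Finset.univ.filter (fun i : Fin N => (i:ℕ) < m), w i := by
      have := sum_le_prefix w hsort s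
      rw [← hm] at this
      linarith
    exact (div_le_div_iff_of_pos_right hDen).mpr h2
  have step2 : g m ≤ g k := hkmax m (by simp [Nat.lt_succ_iff, hmN])
  exact step1.trans step2
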